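/- Given a > 0 and fixed gains gᵢ > 0, the function Ψ(p) = ∑_{i=1}^{L} log₂(1 + gᵢpᵢ) - a·√(∑_{i=1}^{L}(1 - (1+gᵢpᵢ)^{-2})) is a difference of two functions that are each concave and componentwise increasing on ℝ₊^L; in particular, both ∑ᵢ log₂(1+gᵢpᵢ) and a·√(∑ᵢ(1-(1+gᵢpᵢ)^{-2})) are concave and increasing in p. -/
import Mathlib

open Real Finset

/-- auxiliary: pointwise concavity inequality for `x ↦ 1 - ((1+c x)²)⁻¹`. -/
lemma key_term (c x y a b : ℝ) (hc : 0 < c) (hx : 0 ≤ x) (hy : 0 ≤ y)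
    (ha : 0 ≤ a) (hb : 0 ≤ b) (hab : a + b = 1) :
    a * (1 - ((1 + c * x) ^ 2)⁻¹) + b * (1 - ((1 + c * y) ^ 2)⁻¹)
      ≤ 1 - ((1 + c * (a * x + b * y)) ^ 2)⁻¹ := by
  have hu : (1 : ℝ) + c * x ∈ Set.Ioi (0:ℝ) := by
    have : 0 ≤ c * x := mul_nonneg hc.le hx
    simp only [Set.mem_Ioi]; linarith
  have hv : (1 : ℝ) + c * y ∈ Set.Ioi (0:ℝ) := by
    have : 0 ≤ c * y := mul_nonneg hc.le hy
    simp only [Set.mem_Ioi]; linarith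
  have h := (convexOn_zpow (𝕜 := ℝ) (-2)).2 hu hv ha hb hab
  have hw : a • (1 + c * x) + b • (1 + c * y) = 1 + c * (a * x + b * y) := by
    simp only [smul_eq_mul]; nlinarith
  rw [hw] at h
  simp only [smul_eq_mul, zpow_neg, zpow_two] at h
  have e1 : ((1 + c * x) * (1 + c * x))⁻¹ = ((1 + c * x) ^ 2)⁻¹ := by rw [sq]
  have e2 : ((1 + c * y) * (1 + c * y))⁻¹ = ((1 + c * y) ^ 2)⁻¹ := by rw [sq]
  have e3 : ((1 + c * (a * x + b * y)) * (1 + c * (a * x + b * y)))⁻¹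
      = ((1 + c * (a * x + b * y)) ^ 2)⁻¹ := by rw [sq]
  rw [e1, e2, e3] at h
  linarith

/-- auxiliary: pointwise concavity inequality for `x ↦ logb 2 (1+c x)`. -/
lemma key_logb (c x y a b : ℝ) (hc : 0 < c) (hx : 0 ≤ x) (hy : 0 ≤ y)
    (ha : 0 ≤ a) (hb : 0 ≤ b) (hab : a + b = 1) :
    a * Real.logb 2 (1 + c * x) + b * Real.logb 2 (1 + c * y)
      ≤ Real.logb 2 (1 + c * (a * x + b * y)) := by
  have hu : (1 : ℝ) + c * x ∈ Set.Ioi (0:ℝ) := by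
    have : 0 ≤ c * x := mul_nonneg hc.le hx
    simp only [Set.mem_Ioi]; linarith
  have hv : (1 : ℝ) + c * y ∈ Set.Ioi (0:ℝ) := by
    have : 0 ≤ c * y := mul_nonneg hc.le hy
    simp only [Set.mem_Ioi]; linarith
  have h := strictConcaveOn_log_Ioi.concaveOn.2 hu hv ha hb hab
  have hw : a • (1 + c * x) + b • (1 + c * y) = 1 + c * (a * x + b * y) := by
    simp only [smul_eq_mul]; nlinarith
  rw [hw] at h
  simp only [smul_eq_mul] at h
  have hlog2 : 0 < Real.log 2 := Real.log_pos one_lt_two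
  simp only [Real.logb]
  calc a * (Real.log (1 + c * x) / Real.log 2) + b * (Real.log (1 + c * y) / Real.log 2)
      = (a * Real.log (1 + c * x) + b * Real.log (1 + c * y)) / Real.log 2 := by ring
    _ ≤ Real.log (1 + c * (a * x + b * y)) / Real.log 2 := by gcongr

/-- The finite-blocklength rate `Ψ = F - V` is a difference of two functions that
are each concave and componentwise increasing on the nonnegative orthant:
both `F p = ∑ log₂(1 + gᵢ pᵢ)` and `V p = a √(∑ (1 - (1 + gᵢ pᵢ)⁻²))` are
concave and increasing in `p`. -/
theorem fbt_rate_dc_structure (L : ℕ) (a : ℝ) (ha : 0 < a)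
    (g : Fin L → ℝ) (hg : ∀ i, 0 < g i) :
    ConcaveOn ℝ {p : Fin L → ℝ | ∀ i, 0 ≤ p i}
      (fun p : Fin L → ℝ => ∑ i, Real.logb 2 (1 + g i * p i)) ∧
    MonotoneOn (fun p : Fin L → ℝ => ∑ i, Real.logb 2 (1 + g i * p i))
      {p : Fin L → ℝ | ∀ i, 0 ≤ p i} ∧
    ConcaveOn ℝ {p : Fin L → ℝ | ∀ i, 0 ≤ p i}
      (fun p : Fin L → ℝ => a * Real.sqrt (∑ i, (1 - ((1 + g i * p i) ^ 2)⁻¹))) ∧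
    MonotoneOn (fun p : Fin L → ℝ =>
        a * Real.sqrt (∑ i, (1 - ((1 + g i * p i) ^ 2)⁻¹)))
      {p : Fin L → ℝ | ∀ i, 0 ≤ p i} := by
  set s : Set (Fin L → ℝ) := {p : Fin L → ℝ | ∀ i, 0 ≤ p i} with hs
  have hconv : Convex ℝ s := by
    intro x hx y hy α β hα hβ hαβ i
    have := hx i; have := hy i
    simp only [Pi.add_apply, Pi.smul_apply, smul_eq_mul]
    positivity
  -- positivity of arguments
  have hpos : ∀ (p : Fin L → ℝ), p ∈ s → ∀ i, 0 < 1 + g i * p i := by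
    intro p hp i
    have : 0 ≤ g i * p i := mul_nonneg (hg i).le (hp i)
    linarith
  -- each term of the variance sum is nonnegative
  have hterm_nonneg : ∀ (p : Fin L → ℝ), p ∈ s → ∀ i,
      0 ≤ 1 - ((1 + g i * p i) ^ 2)⁻¹ := by
    intro p hp i
    have h1 : (1:ℝ) ≤ 1 + g i * p i := by
      have : 0 ≤ g i * p i := mul_nonneg (hg i).le (hp i); linarith
    have h2 : (1:ℝ) ≤ (1 + g i * p i) ^ 2 := one_le_pow₀ h1
    have h3 : ((1 + g i * p i) ^ 2)⁻¹ ≤ 1 := inv_le_one_of_one_le₀ h2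
    linarith
  have hsum_nonneg : ∀ (p : Fin L → ℝ), p ∈ s →
      0 ≤ ∑ i, (1 - ((1 + g i * p i) ^ 2)⁻¹) :=
    fun p hp => Finset.sum_nonneg fun i _ => hterm_nonneg p hp i
  -- monotonicity of each term
  have hterm_mono : ∀ (p q : Fin L → ℝ), p ∈ s → q ∈ s → p ≤ q → ∀ i,
      1 - ((1 + g i * p i) ^ 2)⁻¹ ≤ 1 - ((1 + g i * q i) ^ 2)⁻¹ := by
    intro p q hp hq hpq i
    have h1 : 0 < 1 + g i * p i := hpos p hp i
    have h2 : 1 + g i * p i ≤ 1 + g i * q i := by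
      have := mul_le_mul_of_nonneg_left (hpq i) (hg i).le; linarith
    have hsq : (1 + g i * p i) ^ 2 ≤ (1 + g i * q i) ^ 2 :=
      pow_le_pow_left₀ h1.le h2 2
    have : ((1 + g i * q i) ^ 2)⁻¹ ≤ ((1 + g i * p i) ^ 2)⁻¹ :=
      inv_anti₀ (by positivity) hsq
    linarith
  refine ⟨?_, ?_, ?_, ?_⟩
  -- 1. concavity of F
  · refine ⟨hconv, fun p hp q hq α β hα hβ hαβ => ?_⟩
    simp only [smul_eq_mul, Finset.mul_sum, ← Finset.sum_add_distrib]
    apply Finset.sum_le_sum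
    intro i _
    have := key_logb (g i) (p i) (q i) α β (hg i) (hp i) (hq i) hα hβ hαβ
    simpa [mul_add] using this
  -- 2. monotonicity of F
  · intro p hp q hq hpq
    apply Finset.sum_le_sum
    intro i _
    have h1 : 0 < 1 + g i * p i := hpos p hp i
    have h2 : 1 + g i * p i ≤ 1 + g i * q i := by
      have := mul_le_mul_of_nonneg_left (hpq i) (hg i).le; linarith
    exact Real.logb_le_logb_of_le one_lt_two h1 h2
  -- 3. concavity of V
  · refine ⟨hconv, fun p hp q hq α β hα hβ hαβ => ?_⟩
    simp only [smul_eq_mul]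
    have hS : α * (∑ i, (1 - ((1 + g i * p i) ^ 2)⁻¹))
        + β * (∑ i, (1 - ((1 + g i * q i) ^ 2)⁻¹))
        ≤ ∑ i, (1 - ((1 + g i * (α * p i + β * q i)) ^ 2)⁻¹) := by
      simp only [Finset.mul_sum, ← Finset.sum_add_distrib]
      apply Finset.sum_le_sum
      intro i _
      exact key_term (g i) (p i) (q i) α β (hg i) (hp i) (hq i) hα hβ hαβ
    have hsqrt_concave := Real.strictConcaveOn_sqrt.concaveOn.2
      (Set.mem_Ici.2 (hsum_nonneg p hp)) (Set.mem_Ici.2 (hsum_nonneg q hq)) hα hβ hαβ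
    simp only [smul_eq_mul] at hsqrt_concave
    have hmono : Real.sqrt (α * (∑ i, (1 - ((1 + g i * p i) ^ 2)⁻¹))
        + β * (∑ i, (1 - ((1 + g i * q i) ^ 2)⁻¹)))
        ≤ Real.sqrt (∑ i, (1 - ((1 + g i * (α * p i + β * q i)) ^ 2)⁻¹)) :=
      Real.sqrt_le_sqrt hS
    have hcomb : α * Real.sqrt (∑ i, (1 - ((1 + g i * p i) ^ 2)⁻¹))
        + β * Real.sqrt (∑ i, (1 - ((1 + g i * q i) ^ 2)⁻¹))
        ≤ Real.sqrt (∑ i, (1 - ((1 + g i * (α * p i + β * q i)) ^ 2)⁻¹)) :=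
      le_trans hsqrt_concave hmono
    have hfinal := mul_le_mul_of_nonneg_left hcomb ha.le
    simp only [Pi.add_apply, Pi.smul_apply, smul_eq_mul]
    calc α * (a * Real.sqrt (∑ i, (1 - ((1 + g i * p i) ^ 2)⁻¹)))
          + β * (a * Real.sqrt (∑ i, (1 - ((1 + g i * q i) ^ 2)⁻¹)))
        = a * (α * Real.sqrt (∑ i, (1 - ((1 + g i * p i) ^ 2)⁻¹))
          + β * Real.sqrt (∑ i, (1 - ((1 + g i * q i) ^ 2)⁻¹))) := by ring
      _ ≤ a * Real.sqrt (∑ i, (1 - ((1 + g i * (α * p i + β * q i)) ^ 2)⁻¹)) := hfinal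
  -- 4. monotonicity of V
  · intro p hp q hq hpq
    apply mul_le_mul_of_nonneg_left _ ha.le
    apply Real.sqrt_le_sqrt
    exact Finset.sum_le_sum fun i _ => hterm_mono p q hp hq hpq i
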